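/- Let δ = 1, h₀, h₁ > 0, 0 < x₁ - x₀ < π, and define A, B, ω₀, h as in the travelling-Dirac ansatz (h(t)=At²-2Bt+h₀, ω₀ = 2τ√(h₀h₁/(1+τ²)), τ = tan((x₁-x₀)/2)). Then ∫₀¹ ω₀/h(t) dt = x₁ - x₀, i.e. the trajectory x(t) solving h(t)x'(t) = ω₀ with x(0) = x₀ satisfies x(1) = x₁. -/

import Mathlib

/-- Travelling-Dirac trajectory reaches its target: with the ansatz constants
(`δ = 1`, `0 < x₁ - x₀ < π`), the trajectory solving `h(t)x'(t) = ω₀`, `x(0) = x₀`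
satisfies `x(1) = x₁`, i.e. `∫₀¹ ω₀/h(t) dt = x₁ - x₀`. -/
theorem travelling_dirac_arrival (h₀ h₁ x₀ x₁ : ℝ) (hh₀ : 0 < h₀) (hh₁ : 0 < h₁)
    (hx : 0 < x₁ - x₀) (hx' : x₁ - x₀ < Real.pi) :
    let τ := Real.tan ((x₁ - x₀) / 2)
    let A := h₀ + h₁ - 2 * Real.sqrt (h₀ * h₁ / (1 + τ ^ 2))
    let B := h₀ - Real.sqrt (h₀ * h₁ / (1 + τ ^ 2))
    let ω₀ := 2 * τ * Real.sqrt (h₀ * h₁ / (1 + τ ^ 2))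
    let h := fun t : ℝ => A * t ^ 2 - 2 * B * t + h₀
    (∫ t in (0 : ℝ)..1, ω₀ / h t) = x₁ - x₀ := by
  intro τ A B ω₀ h
  set θ := (x₁ - x₀) / 2 with hθdef
  have hθ0 : 0 < θ := by positivity
  have hθπ : θ < Real.pi / 2 := by
    simp only [hθdef]; linarith
  set s := Real.sqrt (h₀ * h₁ / (1 + τ ^ 2)) with hsdef
  have hτdef : τ = Real.tan θ := rfl
  have hAdef : A = h₀ + h₁ - 2 * s := rfl
  have hBdef : B = h₀ - s := rfl
  have hωdef : ω₀ = 2 * τ * s := rfl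
  have hhdef : ∀ t : ℝ, h t = A * t ^ 2 - 2 * B * t + h₀ := fun t => rfl
  have hτ : 0 < τ := hτdef ▸ Real.tan_pos_of_pos_of_lt_pi_div_two hθ0 hθπ
  have hs : 0 < s := Real.sqrt_pos.2 (by positivity)
  have hs2 : s ^ 2 * (1 + τ ^ 2) = h₀ * h₁ := by
    rw [hsdef, Real.sq_sqrt (by positivity)]
    field_simp
  clear_value τ s A B ω₀ h
  subst hωdef hAdef hBdef
  -- A > 0
  have hslt : s < Real.sqrt (h₀ * h₁) := by
    rw [hsdef]
    apply Real.sqrt_lt_sqrt (by positivity)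
    rw [div_lt_iff₀ (by positivity)]
    nlinarith [mul_pos (mul_pos hh₀ hh₁) (pow_pos hτ 2)]
  have hsqle : Real.sqrt (h₀ * h₁) ≤ (h₀ + h₁) / 2 := by
    rw [show h₀ * h₁ = ((h₀+h₁)/2)^2 - ((h₀-h₁)/2)^2 by ring]
    calc Real.sqrt (((h₀+h₁)/2)^2 - ((h₀-h₁)/2)^2)
        ≤ Real.sqrt (((h₀+h₁)/2)^2) := Real.sqrt_le_sqrt (by nlinarith [sq_nonneg ((h₀-h₁)/2)])
      _ = (h₀+h₁)/2 := Real.sqrt_sq (by positivity)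
  set A := h₀ + h₁ - 2 * s with hAdef
  set B := h₀ - s with hBdef
  set ω₀ := 2 * τ * s with hωdef
  have hA : 0 < A := by
    have : s < (h₀ + h₁) / 2 := lt_of_lt_of_le hslt hsqle
    rw [hAdef]; linarith
  have hω : 0 < ω₀ := by rw [hωdef]; positivity
  clear_value A B ω₀
  -- key identity: ω₀² = 4*(A*h₀ - B²)
  have hω2 : ω₀ ^ 2 = 4 * (A * h₀ - B ^ 2) := by
    have h1 : ω₀ ^ 2 = 4 * (τ ^ 2 * s ^ 2) := by rw [hωdef]; ring
    have h2 : A * h₀ - B ^ 2 = h₀ * h₁ - s ^ 2 := by rw [hAdef, hBdef]; ring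
    rw [h1, h2]; nlinarith [hs2]
  -- h positive
  have hkey : ∀ t : ℝ, 4 * A * h t = ω₀ ^ 2 + 4 * (A * t - B) ^ 2 := by
    intro t; rw [hhdef t, hω2]; ring
  have hpos : ∀ t : ℝ, 0 < h t := by
    intro t
    nlinarith [hkey t, sq_nonneg (A * t - B), hω, hA]
  -- antiderivative
  have hderiv : ∀ t : ℝ, HasDerivAt (fun t => 2 * Real.arctan (2 * (A * t - B) / ω₀))
      (ω₀ / h t) t := by
    intro t
    have h1 : HasDerivAt (fun t : ℝ => 2 * (A * t - B) / ω₀) (2 * A / ω₀) t := by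
      have := (((hasDerivAt_id t).const_mul A).sub_const B).const_mul 2
      have := this.div_const ω₀
      exact this.congr_deriv (by ring)
    have h2 := (Real.hasDerivAt_arctan (2 * (A * t - B) / ω₀)).comp t h1
    have h3 := h2.const_mul 2
    refine h3.congr_deriv ?_
    have e : 1 + (2 * (A * t - B) / ω₀) ^ 2 = 4 * A * h t / ω₀ ^ 2 := by
      rw [hkey t]
      field_simp
      ring
    rw [e]
    have hht := (hpos t).ne'
    field_simp
    ring
  have hcont : ContinuousOn (fun t => ω₀ / h t) (Set.uIcc (0:ℝ) 1) := by
    apply ContinuousOn.div continuousOn_const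
    · have : Continuous h := by
        have : h = fun t : ℝ => A * t ^ 2 - 2 * B * t + h₀ := funext hhdef
        rw [this]; fun_prop
      exact this.continuousOn
    · intro t _; exact (hpos t).ne'
  have hint : (∫ t in (0:ℝ)..1, ω₀ / h t)
      = 2 * Real.arctan (2 * (A * 1 - B) / ω₀) - 2 * Real.arctan (2 * (A * 0 - B) / ω₀) :=
    intervalIntegral.integral_eq_sub_of_hasDerivAt (fun t _ => hderiv t)
      (hcont.intervalIntegrable)
  rw [hint]
  -- arctan addition
  set a := 2 * (A - B) / ω₀ with hadef
  set b := 2 * B / ω₀ with hbdef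
  have h1ab : 1 - a * b = 4 * A * s / ω₀ ^ 2 := by
    have key : ω₀ ^ 2 - 2 * (A - B) * (2 * B) = 4 * A * s := by
      rw [hω2, hBdef, hAdef]; ring
    rw [hadef, hbdef]
    field_simp
    linear_combination key
  have hab : a * b < 1 := by
    have : 0 < 4 * A * s / ω₀ ^ 2 := by positivity
    linarith
  have hsum : a + b = 2 * A / ω₀ := by rw [hadef, hbdef]; field_simp; ring
  have hfrac : (a + b) / (1 - a * b) = τ := by
    rw [hsum, h1ab, hωdef]
    field_simp
    ring
  have harc : Real.arctan a + Real.arctan b = θ := by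
    rw [Real.arctan_add hab, hfrac, hτdef]
    exact Real.arctan_tan (by linarith) hθπ
  have e0 : 2 * (A * 0 - B) / ω₀ = -b := by rw [hbdef]; ring
  have e1 : 2 * (A * 1 - B) / ω₀ = a := by rw [hadef]; ring
  rw [e0, e1, Real.arctan_neg]
  have : 2 * Real.arctan a - 2 * -Real.arctan b = 2 * (Real.arctan a + Real.arctan b) := by ring
  rw [this, harc, hθdef]
  ring
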